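/- Let ξ be a random vector in ℝ^d (a measurable map from a probability space to Euclidean ℝ^d), and let σ ≥ 0, ρ ≥ 0. Assume: (i) for every u ∈ ℝ^d, the real random variable ⟨ξ,u⟩⁶ is integrable and E[⟨ξ,u⟩⁶] = σ⁶·‖u‖⁶; (ii) for every pair of orthogonal vectors u₁, u₂ ∈ ℝ^d, the random variable ⟨u₁,ξ⟩⁵·⟨u₂,ξ⟩ is integrable and |E[⟨u₁,ξ⟩⁵·⟨u₂,ξ⟩]| ≤ ρ·‖u₁‖⁵·‖u₂‖. Then for all w₁, w₂ ∈ ℝ^d: |E[⟨w₁,ξ⟩⁵·⟨w₂,ξ⟩] − σ⁶·⟨w₁,w₂⟩·‖w₁‖⁴| ≤ ρ·‖w₁‖⁵·‖w₂‖. -/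

import Mathlib

open MeasureTheory
open scoped RealInnerProductSpace

/-- Fifth-moment cross-correlation estimate for the noise vector (part of
Claim A.1 / `claim:noise`): under the homogeneous sixth-moment assumption and the
cross-moment bound for orthogonal directions, `E[⟨w₁,ξ⟩⁵⟨w₂,ξ⟩]` is
`σ⁶⟨w₁,w₂⟩‖w₁‖⁴` up to an error `ρ‖w₁‖⁵‖w₂‖`. -/
theorem noise_fifth_moment_cross {Ω : Type*} [MeasurableSpace Ω]
    (μ : Measure Ω) [IsProbabilityMeasure μ] (d : ℕ)
    (ξ : Ω → EuclideanSpace ℝ (Fin d)) (hξ : Measurable ξ)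
    (σ ρ : ℝ) (hσ : 0 ≤ σ) (hρ : 0 ≤ ρ)
    (h6int : ∀ u : EuclideanSpace ℝ (Fin d),
      Integrable (fun ω => (⟪ξ ω, u⟫) ^ 6) μ)
    (h6 : ∀ u : EuclideanSpace ℝ (Fin d),
      ∫ ω, (⟪ξ ω, u⟫) ^ 6 ∂μ = σ ^ 6 * ‖u‖ ^ 6)
    (hcint : ∀ u₁ u₂ : EuclideanSpace ℝ (Fin d), ⟪u₁, u₂⟫ = 0 →
      Integrable (fun ω => (⟪u₁, ξ ω⟫) ^ 5 * ⟪u₂, ξ ω⟫) μ)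
    (hc : ∀ u₁ u₂ : EuclideanSpace ℝ (Fin d), ⟪u₁, u₂⟫ = 0 →
      |∫ ω, (⟪u₁, ξ ω⟫) ^ 5 * ⟪u₂, ξ ω⟫ ∂μ| ≤ ρ * ‖u₁‖ ^ 5 * ‖u₂‖) :
    ∀ w₁ w₂ : EuclideanSpace ℝ (Fin d),
      |(∫ ω, (⟪w₁, ξ ω⟫) ^ 5 * ⟪w₂, ξ ω⟫ ∂μ)
          - σ ^ 6 * ⟪w₁, w₂⟫ * ‖w₁‖ ^ 4|
        ≤ ρ * ‖w₁‖ ^ 5 * ‖w₂‖ := by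

  intro w₁ w₂
  by_cases hw : w₁ = 0
  · simp [hw, inner_zero_left]
  have hnw : (0:ℝ) < ‖w₁‖ := norm_pos_iff.mpr hw
  set α : ℝ := ⟪w₁, w₂⟫ / ‖w₁‖ ^ 2 with hα
  set v : EuclideanSpace ℝ (Fin d) := w₂ - α • w₁ with hv
  have hov : ⟪w₁, v⟫ = 0 := by
    simp only [hv, inner_sub_right, inner_smul_right, hα,
      real_inner_self_eq_norm_sq]
    field_simp
    ring
  have hvle : ‖v‖ ≤ ‖w₂‖ := by
    have hdec : w₂ = v + α • w₁ := by simp [hv]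
    have hov' : ⟪v, α • w₁⟫ = 0 := by
      rw [real_inner_comm, inner_smul_left]
      simp [hov]
    have hsq : ‖w₂‖ ^ 2 = ‖v‖ ^ 2 + ‖α • w₁‖ ^ 2 := by
      rw [hdec, norm_add_sq_real, hov']; ring
    nlinarith [norm_nonneg v, norm_nonneg w₂, sq_nonneg ‖α • w₁‖]
  have hw2 : ∀ ω, ⟪w₂, ξ ω⟫ = α * ⟪w₁, ξ ω⟫ + ⟪v, ξ ω⟫ := by
    intro ω
    have : w₂ = α • w₁ + v := by simp [hv]
    rw [this, inner_add_left, inner_smul_left]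
    simp
  have hint6 : Integrable (fun ω => (⟪w₁, ξ ω⟫ : ℝ) ^ 6) μ := by
    have heq : (fun ω => (⟪ξ ω, w₁⟫ : ℝ) ^ 6) = fun ω => (⟪w₁, ξ ω⟫ : ℝ) ^ 6 := by
      funext ω; rw [real_inner_comm]
    rw [← heq]; exact h6int w₁
  have hintc : Integrable (fun ω => (⟪w₁, ξ ω⟫ : ℝ) ^ 5 * ⟪v, ξ ω⟫) μ :=
    hcint w₁ v hov
  have key : (∫ ω, (⟪w₁, ξ ω⟫ : ℝ) ^ 5 * ⟪w₂, ξ ω⟫ ∂μ)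
      = α * (∫ ω, (⟪w₁, ξ ω⟫ : ℝ) ^ 6 ∂μ)
        + ∫ ω, (⟪w₁, ξ ω⟫ : ℝ) ^ 5 * ⟪v, ξ ω⟫ ∂μ := by
    have heq : (fun ω => (⟪w₁, ξ ω⟫ : ℝ) ^ 5 * ⟪w₂, ξ ω⟫)
        = (fun ω => α * (⟪w₁, ξ ω⟫ : ℝ) ^ 6 + (⟪w₁, ξ ω⟫ : ℝ) ^ 5 * ⟪v, ξ ω⟫) := by
      funext ω; rw [hw2 ω]; ring
    rw [heq, integral_add (hint6.const_mul α) hintc, integral_const_mul]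
  have h6w : (∫ ω, (⟪w₁, ξ ω⟫ : ℝ) ^ 6 ∂μ) = σ ^ 6 * ‖w₁‖ ^ 6 := by
    rw [← h6 w₁]
    congr 1; funext ω; rw [real_inner_comm]
  have hαval : α * (σ ^ 6 * ‖w₁‖ ^ 6) = σ ^ 6 * ⟪w₁, w₂⟫ * ‖w₁‖ ^ 4 := by
    rw [hα]; field_simp
  have : (∫ ω, (⟪w₁, ξ ω⟫ : ℝ) ^ 5 * ⟪w₂, ξ ω⟫ ∂μ)
      - σ ^ 6 * ⟪w₁, w₂⟫ * ‖w₁‖ ^ 4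
      = ∫ ω, (⟪w₁, ξ ω⟫ : ℝ) ^ 5 * ⟪v, ξ ω⟫ ∂μ := by
    rw [key, h6w, hαval]; ring
  rw [this]
  calc |∫ ω, (⟪w₁, ξ ω⟫ : ℝ) ^ 5 * ⟪v, ξ ω⟫ ∂μ| ≤ ρ * ‖w₁‖ ^ 5 * ‖v‖ :=
        hc w₁ v hov
    _ ≤ ρ * ‖w₁‖ ^ 5 * ‖w₂‖ := by
        apply mul_le_mul_of_nonneg_left hvle
        positivity
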